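/- Let P and P̃ be monic strictly hyperbolic real polynomials of degree n with roots x₁ < … < xₙ and x̃₁ < … < x̃ₙ respectively. Suppose x_i ≤ x̃_i for all i, and x_{i₀} < x̃_{i₀} for at least one index i₀. Then for every k with 1 ≤ k ≤ n−1 and every j with 1 ≤ j ≤ n−k, the j-th roots in increasing order ξ_j of P^{(k)} and ξ̃_j of P̃^{(k)} satisfy ξ_j < ξ̃_j. -/

import Mathlib

open Polynomial Finset

/-! ### Auxiliary sign lemmas -/

private lemma neg_one_pow_card_mul_prod_pos {ι : Type*} [DecidableEq ι]
    (N : Finset ι) (f : ι → ℝ) (h : ∀ m ∈ N, f m < 0) :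
    0 < (-1 : ℝ) ^ N.card * ∏ m ∈ N, f m := by
  induction N using Finset.induction_on with
  | empty => simp
  | @insert a s ha ih =>
    have hfa : f a < 0 := h a (Finset.mem_insert_self a s)
    have hs : 0 < (-1 : ℝ) ^ s.card * ∏ m ∈ s, f m :=
      ih fun m hm => h m (Finset.mem_insert_of_mem hm)
    rw [Finset.card_insert_of_notMem ha, Finset.prod_insert ha]
    have : (-1 : ℝ) ^ (s.card + 1) * (f a * ∏ m ∈ s, f m)
        = (-f a) * ((-1 : ℝ) ^ s.card * ∏ m ∈ s, f m) := by ring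
    rw [this]
    exact mul_pos (by linarith) hs

private lemma sign_prod {ι : Type*} [DecidableEq ι] (s N : Finset ι) (f : ι → ℝ)
    (hNs : N ⊆ s) (hneg : ∀ m ∈ N, f m < 0) (hpos : ∀ m ∈ s, m ∉ N → 0 < f m) :
    0 < (-1 : ℝ) ^ N.card * ∏ m ∈ s, f m := by
  have hsd : (∏ m ∈ s \ N, f m) * ∏ m ∈ N, f m = ∏ m ∈ s, f m :=
    Finset.prod_sdiff hNs
  have hA : 0 < ∏ m ∈ s \ N, f m := by
    apply Finset.prod_pos
    intro m hm
    rw [Finset.mem_sdiff] at hm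
    exact hpos m hm.1 hm.2
  have hB := neg_one_pow_card_mul_prod_pos N f hneg
  have h3 : (-1 : ℝ) ^ N.card * ∏ m ∈ s, f m
      = (∏ m ∈ s \ N, f m) * ((-1 : ℝ) ^ N.card * ∏ m ∈ N, f m) := by
    rw [← hsd]; ring
  rw [h3]
  exact mul_pos hA hB

private lemma opp_sign {a : ℕ} {E1 E2 : ℝ}
    (h1 : 0 < (-1 : ℝ) ^ (a + 1) * E1) (h2 : 0 < (-1 : ℝ) ^ a * E2) :
    E1 * E2 < 0 := by
  rcases Nat.even_or_odd a with he | ho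
  · rw [he.neg_one_pow] at h2
    rw [pow_succ, he.neg_one_pow] at h1
    nlinarith
  · rw [ho.neg_one_pow] at h2
    rw [pow_succ, ho.neg_one_pow] at h1
    nlinarith

private lemma my_inv_le_inv {a b : ℝ} (hab : a ≤ b) (hb : b < 0) : b⁻¹ ≤ a⁻¹ := by
  have h := inv_anti₀ (b := -b) (a := -a) (by linarith) (by linarith)
  rw [inv_neg, inv_neg] at h
  linarith

private lemma my_inv_lt_inv {a b : ℝ} (hab : a < b) (hb : b < 0) : b⁻¹ < a⁻¹ := by
  have h := inv_strictAnti₀ (b := -b) (a := -a) (by linarith) (by linarith)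
  rw [inv_neg, inv_neg] at h
  linarith

/-! ### Derivative of a product of linear factors -/

private lemma deriv_prod_sub {ι : Type*} [DecidableEq ι] (s : Finset ι) (f : ι → ℝ) :
    derivative (∏ i ∈ s, (X - C (f i))) =
      ∑ i ∈ s, ∏ m ∈ s.erase i, (X - C (f m)) := by
  induction s using Finset.induction_on with
  | empty => simp
  | @insert a s ha ih =>
    rw [Finset.prod_insert ha, derivative_mul, ih, derivative_sub, derivative_X,
      derivative_C, sub_zero, one_mul, Finset.sum_insert ha, Finset.erase_insert ha]
    congr 1
    rw [Finset.mul_sum]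
    refine Finset.sum_congr rfl fun i hi => ?_
    have hia : i ≠ a := fun h => ha (h ▸ hi)
    rw [Finset.erase_insert_of_ne hia.symm, Finset.prod_insert]
    exact fun h => ha (Finset.mem_of_mem_erase h)

private lemma eval_deriv_at (n : ℕ) (x : Fin n → ℝ) (l : Fin n) :
    eval (x l) (derivative (∏ i, (X - C (x i)))) =
      ∏ m ∈ Finset.univ.erase l, (x l - x m) := by
  rw [deriv_prod_sub, eval_finset_sum]
  rw [Finset.sum_eq_single l]
  · simp [eval_prod]
  · intro b _ hbl
    rw [eval_prod]
    refine Finset.prod_eq_zero (i := l) ?_ (by simp)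
    exact Finset.mem_erase.2 ⟨hbl.symm, Finset.mem_univ l⟩
  · simp

private lemma eval_deriv_eq (n : ℕ) (x : Fin n → ℝ) (t : ℝ) (ht : ∀ i, t ≠ x i) :
    eval t (derivative (∏ i, (X - C (x i)))) =
      (∏ i, (t - x i)) * ∑ i, (t - x i)⁻¹ := by
  rw [deriv_prod_sub, eval_finset_sum, Finset.mul_sum]
  refine Finset.sum_congr rfl fun i _ => ?_
  rw [eval_prod]
  simp only [eval_sub, eval_X, eval_C]
  have hne : t - x i ≠ 0 := sub_ne_zero.2 (ht i)
  have hkey : (∏ m ∈ Finset.univ.erase i, (t - x m)) * (t - x i) = ∏ m, (t - x m) :=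
    Finset.prod_erase_mul _ _ (Finset.mem_univ i)
  rw [← hkey, mul_inv_cancel_right₀ hne]

/-! ### Sign of `P'` at the roots of `P` -/

private lemma sign_eval_deriv (n : ℕ) (x : Fin n → ℝ) (hx : StrictMono x) (l : Fin n) :
    0 < (-1 : ℝ) ^ (n - 1 - (l : ℕ)) *
      eval (x l) (derivative (∏ i, (X - C (x i)))) := by
  rw [eval_deriv_at, ← Fin.card_Ioi l]
  refine sign_prod _ _ _ ?_ ?_ ?_
  · intro m hm
    rw [Finset.mem_Ioi] at hm
    exact Finset.mem_erase.2 ⟨hm.ne', Finset.mem_univ m⟩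
  · intro m hm
    rw [Finset.mem_Ioi] at hm
    have := hx hm
    linarith
  · intro m hm hm2
    rw [Finset.mem_Ioi] at hm2
    rw [Finset.mem_erase] at hm
    have hml : m < l := lt_of_le_of_ne (not_lt.1 hm2) hm.1
    have := hx hml
    linarith

/-! ### Intermediate value theorem helper -/

private lemma exists_root_between {f : Polynomial ℝ} {a b : ℝ} (hab : a < b)
    (h : eval a f * eval b f < 0) : ∃ r, a < r ∧ r < b ∧ eval r f = 0 := by
  have hc : ContinuousOn (fun t => eval t f) (Set.Icc a b) :=
    (f.continuous).continuousOn
  rcases lt_trichotomy (eval a f) 0 with ha | ha | ha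
  · have hb : 0 < eval b f := by nlinarith
    have h0 : (0 : ℝ) ∈ Set.Ioo (eval a f) (eval b f) := ⟨ha, hb⟩
    obtain ⟨r, hr, hr0⟩ := intermediate_value_Ioo hab.le hc h0
    exact ⟨r, hr.1, hr.2, hr0⟩
  · rw [ha, zero_mul] at h; exact absurd h (lt_irrefl 0)
  · have hb : eval b f < 0 := by nlinarith
    have h0 : (0 : ℝ) ∈ Set.Ioo (eval b f) (eval a f) := ⟨hb, ha⟩
    obtain ⟨r, hr, hr0⟩ := intermediate_value_Ioo' hab.le hc h0
    exact ⟨r, hr.1, hr.2, hr0⟩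

/-! ### Degree and coefficient computations -/

private lemma natDegree_prod_sub (m : ℕ) (ξ : Fin m → ℝ) :
    (∏ i, (X - C (ξ i))).natDegree = m := by
  rw [natDegree_prod_of_monic _ _ fun i _ => monic_X_sub_C (ξ i)]
  simp [natDegree_X_sub_C]

private lemma monic_prod_sub (m : ℕ) (ξ : Fin m → ℝ) :
    (∏ i, (X - C (ξ i))).Monic :=
  monic_prod_of_monic _ _ fun i _ => monic_X_sub_C (ξ i)

private lemma coeff_prod_sub (m : ℕ) (ξ : Fin m → ℝ) :
    (∏ i, (X - C (ξ i))).coeff m = 1 := by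
  have h := (monic_prod_sub m ξ).coeff_natDegree
  rwa [natDegree_prod_sub] at h

private lemma coeff_C_mul_prod (m : ℕ) (c : ℝ) (ξ : Fin m → ℝ) :
    (C c * ∏ i, (X - C (ξ i))).coeff m = c := by
  rw [coeff_C_mul, coeff_prod_sub, mul_one]

private lemma coeff_deriv_prod (n : ℕ) (hn : 1 ≤ n) (x : Fin n → ℝ) :
    (derivative (∏ i, (X - C (x i)))).coeff (n - 1) = (n : ℝ) := by
  rw [coeff_derivative]
  have h1 : n - 1 + 1 = n := Nat.succ_pred_eq_of_pos hn
  rw [h1, coeff_prod_sub, one_mul]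
  push_cast [Nat.cast_sub hn]
  ring

/-! ### Existence of the critical points, with interlacing and factorization -/

private lemma exists_deriv_roots (n : ℕ) (hn : 2 ≤ n) (x : Fin n → ℝ)
    (hx : StrictMono x) :
    ∃ ξ : Fin (n - 1) → ℝ, StrictMono ξ ∧
      (∀ j : Fin (n - 1),
        x ⟨j.1, by have := j.2; omega⟩ < ξ j ∧ ξ j < x ⟨j.1 + 1, by have := j.2; omega⟩) ∧
      derivative (∏ i, (X - C (x i))) = C (n : ℝ) * ∏ j, (X - C (ξ j)) := by
  set P' := derivative (∏ i, (X - C (x i))) with hP'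
  have key : ∀ j : Fin (n - 1), ∃ r,
      x ⟨j.1, by have := j.2; omega⟩ < r ∧
      r < x ⟨j.1 + 1, by have := j.2; omega⟩ ∧ eval r P' = 0 := by
    intro j
    have hj := j.2
    set jl : Fin n := ⟨j.1, by omega⟩ with hjl
    set jr : Fin n := ⟨j.1 + 1, by omega⟩ with hjr
    have h1 := sign_eval_deriv n x hx jl
    have h2 := sign_eval_deriv n x hx jr
    have hexp : n - 1 - (jl : ℕ) = (n - 1 - (jr : ℕ)) + 1 := by
      simp only [hjl, hjr]; omega
    rw [hexp] at h1
    have hEE := opp_sign h1 h2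
    have hab : x jl < x jr := hx (by simp [Fin.lt_def, hjl, hjr])
    exact exists_root_between hab hEE
  choose r hr1 hr2 hr3 using key
  have hrmono : StrictMono r := by
    intro a b hab
    have h1 : (a : ℕ) + 1 ≤ (b : ℕ) := hab
    calc r a < x ⟨a.1 + 1, by have := a.2; omega⟩ := hr2 a
      _ ≤ x ⟨b.1, by have := b.2; omega⟩ := hx.monotone (by simp [Fin.le_def]; omega)
      _ < r b := hr1 b
  refine ⟨r, hrmono, fun j => ⟨hr1 j, hr2 j⟩, ?_⟩
  -- factorization
  have hdvd : (∏ j, (X - C (r j))) ∣ P' := by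
    refine Fintype.prod_dvd_of_coprime
      (pairwise_coprime_X_sub_C hrmono.injective) fun j => ?_
    exact (dvd_iff_isRoot).2 (hr3 j)
  obtain ⟨q, hq⟩ := hdvd
  -- P' ≠ 0
  have hs0 := sign_eval_deriv n x hx ⟨0, by omega⟩
  have hP'ne : P' ≠ 0 := by
    intro h
    rw [← hP', h] at hs0
    simp at hs0
  have hqne : q ≠ 0 := by
    intro h
    rw [h, mul_zero] at hq
    exact hP'ne hq
  have hprodne : (∏ j : Fin (n - 1), (X - C (r j))) ≠ 0 :=
    (monic_prod_sub _ r).ne_zero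
  -- degrees
  have hdegP : (∏ i, (X - C (x i))).natDegree = n := natDegree_prod_sub n x
  have hdegP' : P'.natDegree < n := by
    have := natDegree_derivative_lt (p := ∏ i, (X - C (x i))) (by omega)
    rwa [hdegP] at this
  have hdegq : q.natDegree = 0 := by
    have h1 : P'.natDegree = (n - 1) + q.natDegree := by
      rw [hq, natDegree_mul hprodne hqne, natDegree_prod_sub]
    omega
  obtain ⟨a, ha⟩ : ∃ a, q = C a := ⟨q.coeff 0, eq_C_of_natDegree_eq_zero hdegq⟩
  have hcoeff : P'.coeff (n - 1) = n := coeff_deriv_prod n (by omega) x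
  have hcoeff2 : P'.coeff (n - 1) = a := by
    rw [hq, ha, mul_comm, coeff_C_mul_prod]
  have han : a = n := by rw [hcoeff2] at hcoeff; exact hcoeff
  rw [hq, ha, han, mul_comm]

/-! ### Interlacing for a given factorization -/

private lemma roots_eq (m : ℕ) (ξ r : Fin m → ℝ) (hξ : StrictMono ξ)
    (hr : StrictMono r) (h : ∀ j, ∃ i, ξ j = r i) : ξ = r := by
  have himg : Finset.univ.image ξ ⊆ Finset.univ.image r := by
    intro t ht
    rw [Finset.mem_image] at ht ⊢
    obtain ⟨j, _, hj⟩ := ht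
    obtain ⟨i, hi⟩ := h j
    exact ⟨i, Finset.mem_univ i, by rw [← hi, hj]⟩
  have hcard : (Finset.univ.image r).card ≤ (Finset.univ.image ξ).card := by
    rw [Finset.card_image_of_injective _ hr.injective,
      Finset.card_image_of_injective _ hξ.injective]
  have heq : Finset.univ.image ξ = Finset.univ.image r :=
    Finset.eq_of_subset_of_card_le himg hcard
  have hrange : Set.range ξ = Set.range r := by
    rw [← Set.image_univ, ← Set.image_univ, ← Finset.coe_univ, ← Finset.coe_image,
      ← Finset.coe_image, heq]
  have hwf : WellFoundedLT (Fin m) := inferInstance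
  exact (StrictMono.range_inj (β := Fin m) (γ := ℝ) hξ hr).1 hrange

private lemma interlacing (n : ℕ) (hn : 2 ≤ n) (x : Fin n → ℝ) (hx : StrictMono x)
    (ξ : Fin (n - 1) → ℝ) (hξ : StrictMono ξ) (c : ℝ)
    (hfact : derivative (∏ i, (X - C (x i))) = C c * ∏ j, (X - C (ξ j))) :
    ∀ j : Fin (n - 1),
      x ⟨j.1, by have := j.2; omega⟩ < ξ j ∧ ξ j < x ⟨j.1 + 1, by have := j.2; omega⟩ := by
  obtain ⟨r, hrmono, hrint, hrfact⟩ := exists_deriv_roots n hn x hx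
  have heqfact : C c * (∏ j, (X - C (ξ j))) = C (n : ℝ) * ∏ j, (X - C (r j)) := by
    rw [← hfact, hrfact]
  have hc : c = n := by
    have h1 : (C c * ∏ j, (X - C (ξ j))).coeff (n - 1)
        = (C (n : ℝ) * ∏ j, (X - C (r j))).coeff (n - 1) := by rw [heqfact]
    rwa [coeff_C_mul_prod, coeff_C_mul_prod] at h1
  have hne : (n : ℝ) ≠ 0 := by positivity
  have hroots : ∀ j, ∃ i, ξ j = r i := by
    intro j
    have he : eval (ξ j) (C c * ∏ j', (X - C (ξ j'))) = 0 := by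
      rw [eval_mul, eval_prod]
      refine mul_eq_zero_of_right _ ?_
      exact Finset.prod_eq_zero (Finset.mem_univ j) (by simp)
    rw [heqfact] at he
    rw [eval_mul, eval_prod, eval_C] at he
    rcases mul_eq_zero.1 he with h | h
    · exact absurd h hne
    · obtain ⟨i, _, hi⟩ := Finset.prod_eq_zero_iff.1 h
      simp only [eval_sub, eval_X, eval_C, sub_eq_zero] at hi
      exact ⟨i, hi⟩
  have := roots_eq (n - 1) ξ r hξ hrmono hroots
  subst this
  exact hrint

/-! ### The single-derivative step -/

private lemma step (n : ℕ) (hn : 2 ≤ n) (x y : Fin n → ℝ)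
    (hx : StrictMono x) (hy : StrictMono y)
    (hle : ∀ i, x i ≤ y i) (hlt : ∃ i₀, x i₀ < y i₀)
    (ξ η : Fin (n - 1) → ℝ) (hξ : StrictMono ξ) (hη : StrictMono η)
    (hPd : derivative (∏ i, (X - C (x i))) = C (n : ℝ) * ∏ i, (X - C (ξ i)))
    (hQd : derivative (∏ i, (X - C (y i))) = C (n : ℝ) * ∏ i, (X - C (η i))) :
    ∀ j, ξ j < η j := by
  have hIx := interlacing n hn x hx ξ hξ _ hPd
  have hIy := interlacing n hn y hy η hη _ hQd
  intro j
  by_contra hcon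
  push_neg at hcon  -- hcon : η j ≤ ξ j
  have hj := j.2
  set jl : Fin n := ⟨j.1, by omega⟩ with hjl
  set jr : Fin n := ⟨j.1 + 1, by omega⟩ with hjr
  have hyjl : y jl < ξ j := lt_of_lt_of_le (hIy j).1 hcon
  have hxjl : x jl < ξ j := (hIx j).1
  have hxjr : ξ j < x jr := (hIx j).2
  have hyjr : ξ j < y jr := lt_of_lt_of_le hxjr (hle jr)
  -- ξ j is not a root of P or Q
  have htx : ∀ i, ξ j ≠ x i := by
    intro i
    rcases le_or_gt (i : ℕ) (j : ℕ) with h | h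
    · have : x i ≤ x jl := hx.monotone (by simp [Fin.le_def, hjl]; omega)
      linarith
    · have : x jr ≤ x i := hx.monotone (by simp [Fin.le_def, hjr]; omega)
      linarith
  have hty : ∀ i, ξ j ≠ y i := by
    intro i
    rcases le_or_gt (i : ℕ) (j : ℕ) with h | h
    · have : y i ≤ y jl := hy.monotone (by simp [Fin.le_def, hjl]; omega)
      linarith
    · have : y jr ≤ y i := hy.monotone (by simp [Fin.le_def, hjr]; omega)
      linarith
  -- sum of reciprocals for x vanishes at ξ j
  have hPev : eval (ξ j) (derivative (∏ i, (X - C (x i)))) = 0 := by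
    rw [hPd, eval_mul, eval_prod]
    exact mul_eq_zero_of_right _
      (Finset.prod_eq_zero (Finset.mem_univ j) (by simp))
  have hPprod_ne : (∏ i, (ξ j - x i)) ≠ 0 :=
    Finset.prod_ne_zero_iff.2 fun i _ => sub_ne_zero.2 (htx i)
  have hf0 : ∑ i, (ξ j - x i)⁻¹ = 0 := by
    have h := eval_deriv_eq n x (ξ j) htx
    rw [hPev] at h
    exact (mul_eq_zero.1 h.symm).resolve_left hPprod_ne
  -- sum of reciprocals for y is positive at ξ j
  have hterm_le : ∀ i : Fin n, (ξ j - x i)⁻¹ ≤ (ξ j - y i)⁻¹ := by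
    intro i
    rcases le_or_gt (i : ℕ) (j : ℕ) with h | h
    · have hyi : y i ≤ y jl := hy.monotone (by simp [Fin.le_def, hjl]; omega)
      have h1 : 0 < ξ j - y i := by linarith
      have h2 : ξ j - y i ≤ ξ j - x i := by have := hle i; linarith
      exact inv_anti₀ h1 h2
    · have hxi : x jr ≤ x i := hx.monotone (by simp [Fin.le_def, hjr]; omega)
      have h1 : ξ j - x i < 0 := by linarith
      have h2 : ξ j - y i ≤ ξ j - x i := by have := hle i; linarith
      exact my_inv_le_inv h2 h1
  have hterm_lt : ∃ i : Fin n, (ξ j - x i)⁻¹ < (ξ j - y i)⁻¹ := by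
    obtain ⟨i₀, hi₀⟩ := hlt
    refine ⟨i₀, ?_⟩
    rcases le_or_gt (i₀ : ℕ) (j : ℕ) with h | h
    · have hyi : y i₀ ≤ y jl := hy.monotone (by simp [Fin.le_def, hjl]; omega)
      have h1 : 0 < ξ j - y i₀ := by linarith
      exact inv_strictAnti₀ h1 (by linarith)
    · have hxi : x jr ≤ x i₀ := hx.monotone (by simp [Fin.le_def, hjr]; omega)
      have h1 : ξ j - x i₀ < 0 := by linarith
      exact my_inv_lt_inv (by linarith) h1
  have hg_pos : 0 < ∑ i, (ξ j - y i)⁻¹ := by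
    rw [← hf0]
    obtain ⟨i₀, hi₀⟩ := hterm_lt
    exact Finset.sum_lt_sum (fun i _ => hterm_le i) ⟨i₀, Finset.mem_univ i₀, hi₀⟩
  -- sign of Q(ξ j)
  have hQsign : 0 < (-1 : ℝ) ^ (n - 1 - (j : ℕ)) * ∏ i, (ξ j - y i) := by
    have hcard : (Finset.Ioi jl).card = n - 1 - (j : ℕ) := by
      rw [Fin.card_Ioi]
    rw [← hcard]
    refine sign_prod _ _ _ (Finset.subset_univ _) ?_ ?_
    · intro m hm
      rw [Finset.mem_Ioi] at hm
      have : y jr ≤ y m := hy.monotone (by simp [Fin.le_def, hjr]; exact hm)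
      linarith
    · intro m _ hm2
      rw [Finset.mem_Ioi, not_lt] at hm2
      have : y m ≤ y jl := hy.monotone hm2
      linarith
  -- hence sign of Q'(ξ j)
  have hQev : eval (ξ j) (derivative (∏ i, (X - C (y i)))) =
      (∏ i, (ξ j - y i)) * ∑ i, (ξ j - y i)⁻¹ := eval_deriv_eq n y (ξ j) hty
  have hQ'sign : 0 < (-1 : ℝ) ^ (n - 1 - (j : ℕ)) *
      eval (ξ j) (derivative (∏ i, (X - C (y i)))) := by
    rw [hQev]
    have h3 : (-1 : ℝ) ^ (n - 1 - (j : ℕ)) * ((∏ i, (ξ j - y i)) * ∑ i, (ξ j - y i)⁻¹)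
        = ((-1 : ℝ) ^ (n - 1 - (j : ℕ)) * ∏ i, (ξ j - y i)) * ∑ i, (ξ j - y i)⁻¹ := by
      ring
    rw [h3]
    exact mul_pos hQsign hg_pos
  -- the other expression for Q'(ξ j)
  have hQev2 : eval (ξ j) (derivative (∏ i, (X - C (y i)))) =
      (n : ℝ) * ∏ i, (ξ j - η i) := by
    rw [hQd, eval_mul, eval_prod, eval_C]
    congr 1
    exact Finset.prod_congr rfl fun i _ => by simp
  rcases eq_or_lt_of_le hcon with heq | hlt'
  · -- η j = ξ j : then Q'(ξ j) = 0, contradicting its sign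
    have : eval (ξ j) (derivative (∏ i, (X - C (y i)))) = 0 := by
      rw [hQev2]
      refine mul_eq_zero_of_right _ ?_
      exact Finset.prod_eq_zero (Finset.mem_univ j) (by rw [heq]; ring)
    rw [this, mul_zero] at hQ'sign
    exact lt_irrefl 0 hQ'sign
  · -- η j < ξ j : sign count gives the opposite sign
    have hCsign : 0 < (-1 : ℝ) ^ ((n - 1) - 1 - (j : ℕ)) * ∏ i, (ξ j - η i) := by
      have hcard : (Finset.Ioi j).card = (n - 1) - 1 - (j : ℕ) := by
        rw [Fin.card_Ioi]
      rw [← hcard]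
      refine sign_prod _ _ _ (Finset.subset_univ _) ?_ ?_
      · intro i hi
        rw [Finset.mem_Ioi] at hi
        have hi1 : (j : ℕ) + 1 ≤ (i : ℕ) := hi
        have h1 : y jr ≤ y ⟨i.1, by have := i.2; omega⟩ :=
          hy.monotone (by simp [Fin.le_def, hjr]; omega)
        have h2 : y ⟨i.1, by have := i.2; omega⟩ < η i := (hIy i).1
        linarith
      · intro i _ hi2
        rw [Finset.mem_Ioi, not_lt] at hi2
        rcases eq_or_lt_of_le hi2 with h | h
        · have : η i = η j := by rw [h]
          rw [this]; linarith
        · have : η i < η j := hη h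
          linarith
    have hQ'sign2 : 0 < (-1 : ℝ) ^ ((n - 1) - 1 - (j : ℕ)) *
        eval (ξ j) (derivative (∏ i, (X - C (y i)))) := by
      rw [hQev2]
      have h3 : (-1 : ℝ) ^ ((n - 1) - 1 - (j : ℕ)) * ((n : ℝ) * ∏ i, (ξ j - η i))
          = (n : ℝ) * ((-1 : ℝ) ^ ((n - 1) - 1 - (j : ℕ)) * ∏ i, (ξ j - η i)) := by
        ring
      rw [h3]
      exact mul_pos (by positivity) hCsign
    have hexp : n - 1 - (j : ℕ) = ((n - 1) - 1 - (j : ℕ)) + 1 := by omega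
    rw [hexp] at hQ'sign
    have := opp_sign hQ'sign hQ'sign2
    exact absurd this (not_lt.2 (mul_self_nonneg _))

/-! ### Main induction -/

private lemma main_induction (k : ℕ) :
    ∀ (n : ℕ) (x y : Fin n → ℝ), StrictMono x → StrictMono y →
      (∀ i, x i ≤ y i) → (∃ i₀, x i₀ < y i₀) → 1 ≤ k → k ≤ n - 1 →
      ∀ m : ℕ, n - k = m → ∀ ξ η : Fin m → ℝ, StrictMono ξ → StrictMono η →
        derivative^[k] (∏ i, (X - C (x i))) =
          C ((derivative^[k] (∏ i, (X - C (x i)))).leadingCoeff) * ∏ i, (X - C (ξ i)) →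
        derivative^[k] (∏ i, (X - C (y i))) =
          C ((derivative^[k] (∏ i, (X - C (y i)))).leadingCoeff) * ∏ i, (X - C (η i)) →
        ∀ j, ξ j < η j := by
  induction k with
  | zero => intro n x y _ _ _ _ h1 _; omega
  | succ k ih =>
    intro n x y hx hy hle hlt _ hkn m hm ξ η hξ hη hPf hQf
    have hn2 : 2 ≤ n := by omega
    rcases Nat.eq_zero_or_pos k with hk0 | hkpos
    · -- base case k + 1 = 1
      subst hk0
      have hm1 : m = n - 1 := by omega
      subst hm1
      rw [Function.iterate_one] at hPf hQf
      -- identify the leading coefficients with n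
      have hLP : (derivative (∏ i, (X - C (x i)))).leadingCoeff = (n : ℝ) := by
        have h1 : (derivative (∏ i, (X - C (x i)))).coeff (n - 1)
            = (C ((derivative (∏ i, (X - C (x i)))).leadingCoeff)
                * ∏ i, (X - C (ξ i))).coeff (n - 1) := by rw [← hPf]
        rwa [coeff_deriv_prod n (by omega) x, coeff_C_mul_prod, eq_comm] at h1
      have hLQ : (derivative (∏ i, (X - C (y i)))).leadingCoeff = (n : ℝ) := by
        have h1 : (derivative (∏ i, (X - C (y i)))).coeff (n - 1)
            = (C ((derivative (∏ i, (X - C (y i)))).leadingCoeff)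
                * ∏ i, (X - C (η i))).coeff (n - 1) := by rw [← hQf]
        rwa [coeff_deriv_prod n (by omega) y, coeff_C_mul_prod, eq_comm] at h1
      rw [hLP] at hPf
      rw [hLQ] at hQf
      exact step n hn2 x y hx hy hle hlt ξ η hξ hη hPf hQf
    · -- inductive case: first factor the first derivative
      obtain ⟨ξ1, hξ1mono, hξ1int, hξ1fact⟩ := exists_deriv_roots n hn2 x hx
      obtain ⟨η1, hη1mono, hη1int, hη1fact⟩ := exists_deriv_roots n hn2 y hy
      have hlt1 : ∀ j, ξ1 j < η1 j :=
        step n hn2 x y hx hy hle hlt ξ1 η1 hξ1mono hη1mono hξ1fact hη1fact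
      have hnne : (n : ℝ) ≠ 0 := by positivity
      -- rewrite the iterated derivative through the first derivative
      have hiterP : derivative^[k + 1] (∏ i, (X - C (x i))) =
          C (n : ℝ) * derivative^[k] (∏ i, (X - C (ξ1 i))) := by
        rw [Function.iterate_succ_apply, hξ1fact, iterate_derivative_C_mul]
      have hiterQ : derivative^[k + 1] (∏ i, (X - C (y i))) =
          C (n : ℝ) * derivative^[k] (∏ i, (X - C (η1 i))) := by
        rw [Function.iterate_succ_apply, hη1fact, iterate_derivative_C_mul]
      -- deduce factorizations of the k-th derivatives of the level-1 polynomials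
      have hfactP1 : derivative^[k] (∏ i, (X - C (ξ1 i))) =
          C ((derivative^[k] (∏ i, (X - C (ξ1 i)))).leadingCoeff) * ∏ i, (X - C (ξ i)) := by
        set L := (derivative^[k + 1] (∏ i, (X - C (x i)))).leadingCoeff with hL
        have hD : derivative^[k] (∏ i, (X - C (ξ1 i))) =
            C (L * (n : ℝ)⁻¹) * ∏ i, (X - C (ξ i)) := by
          apply mul_left_cancel₀ (a := C (n : ℝ)) (by simpa using hnne)
          rw [← hiterP, hPf, ← mul_assoc, ← C_mul]
          congr 2
          field_simp
        have hlc : (derivative^[k] (∏ i, (X - C (ξ1 i)))).leadingCoeff = L * (n : ℝ)⁻¹ := by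
          rw [hD, leadingCoeff_mul_monic (monic_prod_sub m ξ), leadingCoeff_C]
        rw [hlc]; exact hD
      have hfactQ1 : derivative^[k] (∏ i, (X - C (η1 i))) =
          C ((derivative^[k] (∏ i, (X - C (η1 i)))).leadingCoeff) * ∏ i, (X - C (η i)) := by
        set L := (derivative^[k + 1] (∏ i, (X - C (y i)))).leadingCoeff with hL
        have hD : derivative^[k] (∏ i, (X - C (η1 i))) =
            C (L * (n : ℝ)⁻¹) * ∏ i, (X - C (η i)) := by
          apply mul_left_cancel₀ (a := C (n : ℝ)) (by simpa using hnne)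
          rw [← hiterQ, hQf, ← mul_assoc, ← C_mul]
          congr 2
          field_simp
        have hlc : (derivative^[k] (∏ i, (X - C (η1 i)))).leadingCoeff = L * (n : ℝ)⁻¹ := by
          rw [hD, leadingCoeff_mul_monic (monic_prod_sub m η), leadingCoeff_C]
        rw [hlc]; exact hD
      -- apply the induction hypothesis at level n - 1
      exact ih (n - 1) ξ1 η1 hξ1mono hη1mono (fun i => (hlt1 i).le)
        ⟨⟨0, by omega⟩, hlt1 _⟩ hkpos (by omega) m (by omega) ξ η hξ hη hfactP1 hfactQ1

/-- Strict monotone dependence of the roots of `P^{(k)}` on the roots of `P`: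
if `P` and `Q` are monic strictly hyperbolic real polynomials of degree `n` with
roots `x 0 < … < x (n-1)` and `y 0 < … < y (n-1)` satisfying `x i ≤ y i` for
all `i` with at least one strict inequality, then for every `1 ≤ k ≤ n - 1` the
increasingly ordered roots `ξ` of `P^{(k)}` and `η` of `Q^{(k)}` satisfy
`ξ j < η j` for all `j`. -/
theorem roots_of_derivative_strictly_monotone_in_roots
    (n : ℕ) (x y : Fin n → ℝ) (hx : StrictMono x) (hy : StrictMono y)
    (P Q : Polynomial ℝ)
    (hP : P = ∏ i, (X - C (x i))) (hQ : Q = ∏ i, (X - C (y i)))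
    (hle : ∀ i, x i ≤ y i) (hlt : ∃ i₀, x i₀ < y i₀) :
    ∀ k : ℕ, 1 ≤ k → k ≤ n - 1 →
      ∀ ξ η : Fin (n - k) → ℝ, StrictMono ξ → StrictMono η →
        Polynomial.derivative^[k] P =
          C ((Polynomial.derivative^[k] P).leadingCoeff) * ∏ i, (X - C (ξ i)) →
        Polynomial.derivative^[k] Q =
          C ((Polynomial.derivative^[k] Q).leadingCoeff) * ∏ i, (X - C (η i)) →
        ∀ j : Fin (n - k), ξ j < η j := by
  subst hP hQ
  intro k hk1 hkn ξ η hξ hη hPf hQf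
  exact main_induction k n x y hx hy hle hlt hk1 hkn (n - k) rfl ξ η hξ hη hPf hQf
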